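/- Let A₁, …, A_m ∈ C^{n×n} and γ₁, …, γ_m ∈ R. If Σ_{k=1}^m θ(e^{−iγ_k} A_k) + | Σ_{k=1}^m γ_k | < π, then the singular angle of the product satisfies θ(A_m A_{m−1} ⋯ A₁) ≤ Σ_{k=1}^m θ(e^{−iγ_k} A_k) + | Σ_{k=1}^m γ_k | < π, and consequently |arg λ| < π for every nonzero eigenvalue λ of A_m⋯A₁, so I + A_m⋯A₁ is invertible. -/

import Mathlib

open scoped Matrix

noncomputable def evnorm {n : ℕ} (x : Fin n → ℂ) : ℝ :=
  Real.sqrt ((star x ⬝ᵥ x).re)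

noncomputable def qform {n : ℕ} (A : Matrix (Fin n) (Fin n) ℂ) (x : Fin n → ℂ) : ℂ :=
  star x ⬝ᵥ A.mulVec x

noncomputable def nnr {n : ℕ} (A : Matrix (Fin n) (Fin n) ℂ) : Set ℂ :=
  {z | ∃ x : Fin n → ℂ, x ≠ 0 ∧ A.mulVec x ≠ 0 ∧
    z = qform A x / ((evnorm x * evnorm (A.mulVec x) : ℝ) : ℂ)}

noncomputable def singAngle {n : ℕ} (A : Matrix (Fin n) (Fin n) ℂ) : ℝ :=
  sSup {θ : ℝ | ∃ x : Fin n → ℂ, x ≠ 0 ∧ A.mulVec x ≠ 0 ∧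
    θ = Real.arccos ((qform A x).re / (evnorm x * evnorm (A.mulVec x)))}

noncomputable def revProd {n m : ℕ} (A : Fin m → Matrix (Fin n) (Fin n) ℂ) :
    Matrix (Fin n) (Fin n) ℂ :=
  (List.ofFn A).reverse.prod

namespace Stmt16Aux

variable {n : ℕ}

/-- The real inner product `re ⟪x, y⟫`. -/
noncomputable def rin (x y : Fin n → ℂ) : ℝ := (star x ⬝ᵥ y).re

/-- The (real) angle between two vectors. -/
noncomputable def ang (x y : Fin n → ℂ) : ℝ :=
  Real.arccos (rin x y / (evnorm x * evnorm y))

noncomputable def toE (x : Fin n → ℂ) : EuclideanSpace ℂ (Fin n) :=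
  (WithLp.equiv 2 (Fin n → ℂ)).symm x

lemma inner_toE (x y : Fin n → ℂ) : (inner ℂ (toE x) (toE y) : ℂ) = star x ⬝ᵥ y := by
  rw [dotProduct_comm]; rfl

lemma norm_toE (x : Fin n → ℂ) : ‖toE x‖ = evnorm x := by
  have h := inner_self_eq_norm_sq_to_K (𝕜 := ℂ) (toE x)
  rw [inner_toE] at h
  have h2 : (star x ⬝ᵥ x).re = ‖toE x‖ ^ 2 := by
    rw [h]; norm_cast
  rw [evnorm, h2, Real.sqrt_sq (norm_nonneg _)]

lemma toE_eq_zero {x : Fin n → ℂ} : toE x = 0 ↔ x = 0 := by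
  constructor <;> intro h
  · simpa [toE] using h
  · simp [h, toE]

lemma evnorm_nonneg (x : Fin n → ℂ) : 0 ≤ evnorm x := Real.sqrt_nonneg _

lemma evnorm_pos {x : Fin n → ℂ} (hx : x ≠ 0) : 0 < evnorm x := by
  rw [← norm_toE]
  exact norm_pos_iff.mpr (fun h => hx (toE_eq_zero.mp h))

lemma rin_self (x : Fin n → ℂ) : rin x x = evnorm x ^ 2 := by
  have h := inner_self_eq_norm_sq_to_K (𝕜 := ℂ) (toE x)
  rw [inner_toE] at h
  rw [rin, h, ← norm_toE]; norm_cast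

lemma abs_rin_le (x y : Fin n → ℂ) : |rin x y| ≤ evnorm x * evnorm y := by
  have h1 : |rin x y| ≤ ‖(star x ⬝ᵥ y : ℂ)‖ := by
    exact Complex.abs_re_le_norm _
  have h2 : ‖(star x ⬝ᵥ y : ℂ)‖ ≤ ‖toE x‖ * ‖toE y‖ := by
    rw [← inner_toE]; exact norm_inner_le_norm _ _
  rw [norm_toE, norm_toE] at h2
  exact h1.trans h2

lemma rin_comm (x y : Fin n → ℂ) : rin x y = rin y x := by
  rw [rin, rin, Matrix.star_dotProduct]
  exact Complex.conj_re _

lemma rin_sub_left (x y z : Fin n → ℂ) : rin (x - y) z = rin x z - rin y z := by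
  simp [rin, sub_dotProduct]

lemma rin_sub_right (x y z : Fin n → ℂ) : rin x (y - z) = rin x y - rin x z := by
  simp [rin, dotProduct_sub]

lemma rin_smul_left (r : ℝ) (x y : Fin n → ℂ) :
    rin ((r : ℂ) • x) y = r * rin x y := by
  rw [rin, star_smul, smul_dotProduct]
  simp [Complex.re_ofReal_mul, rin]

lemma rin_smul_right (r : ℝ) (x y : Fin n → ℂ) :
    rin x ((r : ℂ) • y) = r * rin x y := by
  rw [rin, dotProduct_smul]
  simp [Complex.re_ofReal_mul, rin]

lemma evnorm_smul (c : ℂ) (x : Fin n → ℂ) : evnorm (c • x) = ‖c‖ * evnorm x := by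
  have : toE (c • x) = c • toE x := rfl
  rw [← norm_toE, this, norm_smul, norm_toE]

lemma evnorm_eq_sqrt_rin (x : Fin n → ℂ) : evnorm x = Real.sqrt (rin x x) := by
  rw [rin_self, Real.sqrt_sq (evnorm_nonneg x)]

lemma ang_nonneg (x y : Fin n → ℂ) : 0 ≤ ang x y := Real.arccos_nonneg _

lemma ang_le_pi (x y : Fin n → ℂ) : ang x y ≤ Real.pi := Real.arccos_le_pi _

lemma arccos_le_arccos {s t : ℝ} (h : s ≤ t) : Real.arccos t ≤ Real.arccos s := by
  rw [Real.arccos_eq_pi_div_two_sub_arcsin, Real.arccos_eq_pi_div_two_sub_arcsin]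
  have := Real.monotone_arcsin h
  linarith

lemma ang_smul_pos_left {r : ℝ} (hr : 0 < r) (x y : Fin n → ℂ) :
    ang ((r : ℂ) • x) y = ang x y := by
  rw [ang, ang, rin_smul_left, evnorm_smul]
  rw [Complex.norm_real, Real.norm_eq_abs, abs_of_pos hr]
  congr 1
  have hd : r * evnorm x * evnorm y = r * (evnorm x * evnorm y) := by ring
  rw [hd, mul_div_mul_left _ _ hr.ne']

lemma ang_smul_pos_right {r : ℝ} (hr : 0 < r) (x y : Fin n → ℂ) :
    ang x ((r : ℂ) • y) = ang x y := by
  rw [ang, ang, rin_smul_right, evnorm_smul]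
  rw [Complex.norm_real, Real.norm_eq_abs, abs_of_pos hr]
  congr 1
  have hd : evnorm x * (r * evnorm y) = r * (evnorm x * evnorm y) := by ring
  rw [hd, mul_div_mul_left _ _ hr.ne']

/-- Triangle inequality for the angle, unit-vector case. -/
lemma ang_triangle_unit (x y z : Fin n → ℂ) (hx : evnorm x = 1) (hy : evnorm y = 1)
    (hz : evnorm z = 1) : ang x z ≤ ang x y + ang y z := by
  set a := rin x y with ha
  set b := rin y z with hb
  set c := rin x z with hc
  have hxy : rin y x = a := by rw [rin_comm]
  have hzy : rin z y = b := by rw [rin_comm]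
  have hyy : rin y y = 1 := by rw [rin_self, hy]; norm_num
  have hxx : rin x x = 1 := by rw [rin_self, hx]; norm_num
  have hzz : rin z z = 1 := by rw [rin_self, hz]; norm_num
  have haa : |a| ≤ 1 := by have := abs_rin_le x y; rwa [hx, hy, one_mul] at this
  have hbb : |b| ≤ 1 := by have := abs_rin_le y z; rwa [hy, hz, one_mul] at this
  have hcc : |c| ≤ 1 := by have := abs_rin_le x z; rwa [hx, hz, one_mul] at this
  have hax : ang x y = Real.arccos a := by rw [ang, hx, hy, ← ha]; norm_num
  have hbx : ang y z = Real.arccos b := by rw [ang, hy, hz, ← hb]; norm_num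
  have hcx : ang x z = Real.arccos c := by rw [ang, hx, hz, ← hc]; norm_num
  -- the two "perpendicular components"
  set u := x - (a : ℂ) • y with hu
  set v := z - (b : ℂ) • y with hv
  have huu : rin u u = 1 - a ^ 2 := by
    rw [hu, rin_sub_left, rin_sub_right, rin_sub_right, rin_smul_left, rin_smul_left,
      rin_smul_right, rin_smul_right, hxx, hyy, hxy, ← ha]
    ring
  have hvv : rin v v = 1 - b ^ 2 := by
    rw [hv, rin_sub_left, rin_sub_right, rin_sub_right, rin_smul_left, rin_smul_left,
      rin_smul_right, rin_smul_right, hzz, hyy, hzy, ← hb]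
    ring
  have huv : rin u v = c - a * b := by
    rw [hu, hv, rin_sub_left, rin_sub_right, rin_sub_right, rin_smul_left, rin_smul_left,
      rin_smul_right, rin_smul_right, hyy]
    ring
  have hnu : evnorm u = Real.sqrt (1 - a ^ 2) := by rw [evnorm_eq_sqrt_rin, huu]
  have hnv : evnorm v = Real.sqrt (1 - b ^ 2) := by rw [evnorm_eq_sqrt_rin, hvv]
  have hCS : -(Real.sqrt (1 - a ^ 2) * Real.sqrt (1 - b ^ 2)) ≤ c - a * b := by
    have := abs_rin_le u v
    rw [hnu, hnv, huv] at this
    have := neg_abs_le (c - a * b)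
    linarith [abs_rin_le u v, (neg_abs_le (c - a * b)), (abs_le.mp (le_refl |c - a*b|))]
  have hkey : Real.cos (Real.arccos a + Real.arccos b) ≤ c := by
    rw [Real.cos_add, Real.cos_arccos (neg_le_of_abs_le haa) (le_of_abs_le haa),
      Real.cos_arccos (neg_le_of_abs_le hbb) (le_of_abs_le hbb),
      Real.sin_arccos, Real.sin_arccos]
    linarith
  rw [hax, hbx, hcx]
  rcases le_or_gt Real.pi (Real.arccos a + Real.arccos b) with hge | hlt
  · exact (Real.arccos_le_pi c).trans hge
  · have h0 : 0 ≤ Real.arccos a + Real.arccos b :=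
      add_nonneg (Real.arccos_nonneg _) (Real.arccos_nonneg _)
    calc Real.arccos c ≤ Real.arccos (Real.cos (Real.arccos a + Real.arccos b)) :=
          arccos_le_arccos hkey
      _ = Real.arccos a + Real.arccos b := Real.arccos_cos h0 hlt.le

/-- Triangle inequality for the angle. -/
lemma ang_triangle (x y z : Fin n → ℂ) (hx : x ≠ 0) (hy : y ≠ 0) (hz : z ≠ 0) :
    ang x z ≤ ang x y + ang y z := by
  have px := evnorm_pos hx
  have py := evnorm_pos hy
  have pz := evnorm_pos hz
  have nx : evnorm (((evnorm x)⁻¹ : ℝ) • x : Fin n → ℂ) = 1 := by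
    rw [show (((evnorm x)⁻¹ : ℝ) • x : Fin n → ℂ) = (((evnorm x)⁻¹ : ℝ) : ℂ) • x from rfl,
      evnorm_smul, Complex.norm_real, Real.norm_eq_abs, abs_of_pos (inv_pos.mpr px), inv_mul_cancel₀ px.ne']
  have ny : evnorm (((evnorm y)⁻¹ : ℝ) • y : Fin n → ℂ) = 1 := by
    rw [show (((evnorm y)⁻¹ : ℝ) • y : Fin n → ℂ) = (((evnorm y)⁻¹ : ℝ) : ℂ) • y from rfl,
      evnorm_smul, Complex.norm_real, Real.norm_eq_abs, abs_of_pos (inv_pos.mpr py), inv_mul_cancel₀ py.ne']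
  have nz : evnorm (((evnorm z)⁻¹ : ℝ) • z : Fin n → ℂ) = 1 := by
    rw [show (((evnorm z)⁻¹ : ℝ) • z : Fin n → ℂ) = (((evnorm z)⁻¹ : ℝ) : ℂ) • z from rfl,
      evnorm_smul, Complex.norm_real, Real.norm_eq_abs, abs_of_pos (inv_pos.mpr pz), inv_mul_cancel₀ pz.ne']
  have H := ang_triangle_unit ((((evnorm x)⁻¹ : ℝ) : ℂ) • x) ((((evnorm y)⁻¹ : ℝ) : ℂ) • y)
    ((((evnorm z)⁻¹ : ℝ) : ℂ) • z) nx ny nz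
  rwa [ang_smul_pos_left (inv_pos.mpr px), ang_smul_pos_left (inv_pos.mpr px),
    ang_smul_pos_right (inv_pos.mpr py), ang_smul_pos_left (inv_pos.mpr py),
    ang_smul_pos_right (inv_pos.mpr pz), ang_smul_pos_right (inv_pos.mpr pz)] at H

/-! ### singAngle lemmas -/

def SAset (A : Matrix (Fin n) (Fin n) ℂ) : Set ℝ :=
  {θ : ℝ | ∃ x : Fin n → ℂ, x ≠ 0 ∧ A.mulVec x ≠ 0 ∧
    θ = Real.arccos ((qform A x).re / (evnorm x * evnorm (A.mulVec x)))}

lemma singAngle_eq (A : Matrix (Fin n) (Fin n) ℂ) : singAngle A = sSup (SAset A) := rfl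

lemma mem_SAset_eq_ang {A : Matrix (Fin n) (Fin n) ℂ} {θ : ℝ} (h : θ ∈ SAset A) :
    ∃ x : Fin n → ℂ, x ≠ 0 ∧ A.mulVec x ≠ 0 ∧ θ = ang x (A.mulVec x) := h

lemma SAset_bddAbove (A : Matrix (Fin n) (Fin n) ℂ) : BddAbove (SAset A) := by
  refine ⟨Real.pi, fun θ hθ => ?_⟩
  obtain ⟨x, _, _, rfl⟩ := hθ
  exact Real.arccos_le_pi _

lemma singAngle_nonneg (A : Matrix (Fin n) (Fin n) ℂ) : 0 ≤ singAngle A := by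
  rw [singAngle_eq]
  rcases Set.eq_empty_or_nonempty (SAset A) with h | ⟨θ, hθ⟩
  · rw [h, Real.sSup_empty]
  · have h1 : θ ≤ sSup (SAset A) := le_csSup (SAset_bddAbove A) hθ
    obtain ⟨x, _, _, rfl⟩ := hθ
    exact le_trans (Real.arccos_nonneg _) h1

lemma ang_le_singAngle (A : Matrix (Fin n) (Fin n) ℂ) {x : Fin n → ℂ} (hx : x ≠ 0)
    (hAx : A.mulVec x ≠ 0) : ang x (A.mulVec x) ≤ singAngle A :=
  le_csSup (SAset_bddAbove A) ⟨x, hx, hAx, rfl⟩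

lemma singAngle_le {A : Matrix (Fin n) (Fin n) ℂ} {c : ℝ} (hc : 0 ≤ c)
    (H : ∀ x : Fin n → ℂ, x ≠ 0 → A.mulVec x ≠ 0 → ang x (A.mulVec x) ≤ c) :
    singAngle A ≤ c := by
  rw [singAngle_eq]
  refine Real.sSup_le (fun θ hθ => ?_) hc
  obtain ⟨x, hx, hAx, rfl⟩ := hθ
  exact H x hx hAx

lemma singAngle_mul_le (M N : Matrix (Fin n) (Fin n) ℂ) :
    singAngle (M * N) ≤ singAngle M + singAngle N := by
  refine singAngle_le (add_nonneg (singAngle_nonneg M) (singAngle_nonneg N)) ?_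
  intro x hx hMNx
  have hMNx' : M.mulVec (N.mulVec x) ≠ 0 := by
    rwa [Matrix.mulVec_mulVec]
  have hNx : N.mulVec x ≠ 0 := by
    intro h0; apply hMNx'; rw [h0, Matrix.mulVec_zero]
  have h1 : ang x ((M * N).mulVec x) = ang x (M.mulVec (N.mulVec x)) := by
    rw [Matrix.mulVec_mulVec]
  rw [h1]
  calc ang x (M.mulVec (N.mulVec x))
      ≤ ang x (N.mulVec x) + ang (N.mulVec x) (M.mulVec (N.mulVec x)) :=
        ang_triangle x (N.mulVec x) (M.mulVec (N.mulVec x)) hx hNx hMNx'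
    _ ≤ singAngle N + singAngle M :=
        add_le_add (ang_le_singAngle N hx hNx) (ang_le_singAngle M hNx hMNx')
    _ = singAngle M + singAngle N := add_comm _ _

lemma ang_smul_self {c : ℂ} (hc : c ≠ 0) {y : Fin n → ℂ} (hy : y ≠ 0) :
    ang y (c • y) = |c.arg| := by
  have hr := evnorm_pos hy
  have h1 : rin y (c • y) = c.re * evnorm y ^ 2 := by
    rw [rin, dotProduct_smul]
    have h2 : (star y ⬝ᵥ y : ℂ) = ((evnorm y : ℝ) : ℂ) ^ 2 := by
      rw [← inner_toE, inner_self_eq_norm_sq_to_K, norm_toE]; norm_cast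
    rw [h2, smul_eq_mul]
    simp [Complex.mul_re, ← Complex.ofReal_pow]
  have h3 : evnorm (c • y) = ‖c‖ * evnorm y := evnorm_smul c y
  rw [ang, h1, h3]
  have habs : ‖c‖ ≠ 0 := norm_ne_zero_iff.mpr hc
  have h4 : c.re * evnorm y ^ 2 / (evnorm y * (‖c‖ * evnorm y)) =
      c.re / ‖c‖ := by
    field_simp
  rw [h4, ← Complex.cos_arg hc, ← Real.cos_abs,
    Real.arccos_cos (abs_nonneg _) (Complex.abs_arg_le_pi c)]

lemma singAngle_smul_le {c : ℂ} (hc : c ≠ 0) (M : Matrix (Fin n) (Fin n) ℂ) :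
    singAngle (c • M) ≤ singAngle M + |c.arg| := by
  refine singAngle_le (add_nonneg (singAngle_nonneg M) (abs_nonneg _)) ?_
  intro x hx hcMx
  have heq : (c • M).mulVec x = c • M.mulVec x := Matrix.smul_mulVec c M x
  have hMx : M.mulVec x ≠ 0 := by
    intro h0; apply hcMx; rw [heq, h0, smul_zero]
  have hcMx' : c • M.mulVec x ≠ 0 := by rw [← heq]; exact hcMx
  rw [heq]
  calc ang x (c • M.mulVec x)
      ≤ ang x (M.mulVec x) + ang (M.mulVec x) (c • M.mulVec x) :=
        ang_triangle _ _ _ hx hMx hcMx'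
    _ = ang x (M.mulVec x) + |c.arg| := by rw [ang_smul_self hc hMx]
    _ ≤ singAngle M + |c.arg| := by
        have := ang_le_singAngle M hx hMx; linarith

lemma singAngle_one : singAngle (1 : Matrix (Fin n) (Fin n) ℂ) ≤ 0 := by
  refine singAngle_le le_rfl ?_
  intro x hx hAx
  have h1 : (1 : Matrix (Fin n) (Fin n) ℂ).mulVec x = x := Matrix.one_mulVec x
  rw [h1]
  have hr := evnorm_pos hx
  rw [ang, rin_self]
  have : evnorm x ^ 2 / (evnorm x * evnorm x) = 1 := by field_simp
  rw [this, Real.arccos_one]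

/-! ### revProd lemmas -/

lemma revProd_zero (A : Fin 0 → Matrix (Fin n) (Fin n) ℂ) : revProd A = 1 := by
  simp [revProd]

lemma revProd_succ {m : ℕ} (A : Fin (m + 1) → Matrix (Fin n) (Fin n) ℂ) :
    revProd A = revProd (fun i => A i.succ) * A 0 := by
  rw [revProd, List.ofFn_succ, List.reverse_cons, List.prod_append]
  simp [revProd]

lemma singAngle_revProd_le {m : ℕ} (B : Fin m → Matrix (Fin n) (Fin n) ℂ) :
    singAngle (revProd B) ≤ ∑ k, singAngle (B k) := by
  induction m with
  | zero =>
    have h0 : revProd B = 1 := revProd_zero B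
    rw [h0, Finset.univ_eq_empty, Finset.sum_empty]
    exact singAngle_one
  | succ m ih =>
    rw [revProd_succ, Fin.sum_univ_succ]
    have h1 := singAngle_mul_le (revProd (fun i => B i.succ)) (B 0)
    have h2 := ih (fun i => B i.succ)
    linarith

lemma revProd_smul {m : ℕ} (c : Fin m → ℂ) (B : Fin m → Matrix (Fin n) (Fin n) ℂ) :
    revProd (fun k => c k • B k) = (∏ k, c k) • revProd B := by
  induction m with
  | zero => simp [revProd_zero]
  | succ m ih =>
    rw [revProd_succ, revProd_succ B, Fin.prod_univ_succ]
    rw [ih (fun i => c i.succ) (fun i => B i.succ)]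
    rw [smul_mul_smul_comm]
    rw [mul_comm (c 0)]

end Stmt16Aux

open Stmt16Aux

theorem stmt16 {n m : ℕ} (Ak : Fin m → Matrix (Fin n) (Fin n) ℂ) (γ : Fin m → ℝ)
    (h : (∑ k, singAngle (Complex.exp (-(γ k : ℂ) * Complex.I) • Ak k)) +
        |∑ k, γ k| < Real.pi) :
    singAngle (revProd Ak) ≤
        (∑ k, singAngle (Complex.exp (-(γ k : ℂ) * Complex.I) • Ak k)) + |∑ k, γ k| ∧
      (∀ μ ∈ spectrum ℂ (revProd Ak), μ ≠ 0 → |Complex.arg μ| < Real.pi) ∧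
      IsUnit (1 + revProd Ak) := by
  classical
  set B : Fin m → Matrix (Fin n) (Fin n) ℂ :=
    fun k => Complex.exp (-(γ k : ℂ) * Complex.I) • Ak k with hB
  set σ : ℝ := ∑ k, γ k with hσ
  have hsum : ∑ k, singAngle (B k) =
      ∑ k, singAngle (Complex.exp (-(γ k : ℂ) * Complex.I) • Ak k) := rfl
  have hθ0 : 0 ≤ ∑ k, singAngle (Complex.exp (-(γ k : ℂ) * Complex.I) • Ak k) :=
    Finset.sum_nonneg fun k _ => singAngle_nonneg _
  have hσπ : |σ| < Real.pi := by linarith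
  -- A_k = exp(γ_k I) • B_k
  have hAk : Ak = fun k => Complex.exp ((γ k : ℂ) * Complex.I) • B k := by
    funext k
    rw [hB, smul_smul, ← Complex.exp_add]
    have : (γ k : ℂ) * Complex.I + -(γ k : ℂ) * Complex.I = 0 := by ring
    rw [this, Complex.exp_zero, one_smul]
  have hprod : revProd Ak = Complex.exp ((σ : ℂ) * Complex.I) • revProd B := by
    rw [hAk, revProd_smul]
    congr 1
    rw [← Complex.exp_sum]
    congr 1
    rw [hσ]
    push_cast
    rw [Finset.sum_mul]
  have hexp_ne : Complex.exp ((σ : ℂ) * Complex.I) ≠ 0 := Complex.exp_ne_zero _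
  have harg : (Complex.exp ((σ : ℂ) * Complex.I)).arg = σ := by
    rw [show ((σ : ℂ) * Complex.I) = ((σ : ℝ) : ℂ) * Complex.I from rfl,
      Complex.exp_mul_I]
    have hmem : σ ∈ Set.Ioc (-Real.pi) Real.pi := by
      have := abs_lt.mp hσπ
      exact ⟨this.1, this.2.le⟩
    exact Complex.arg_cos_add_sin_mul_I hmem
  have hmain : singAngle (revProd Ak) ≤
      (∑ k, singAngle (Complex.exp (-(γ k : ℂ) * Complex.I) • Ak k)) + |σ| := by
    rw [hprod]
    calc singAngle (Complex.exp ((σ : ℂ) * Complex.I) • revProd B)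
        ≤ singAngle (revProd B) + |(Complex.exp ((σ : ℂ) * Complex.I)).arg| :=
          singAngle_smul_le hexp_ne _
      _ = singAngle (revProd B) + |σ| := by rw [harg]
      _ ≤ (∑ k, singAngle (B k)) + |σ| := by
          have := singAngle_revProd_le B; linarith
      _ = (∑ k, singAngle (Complex.exp (-(γ k : ℂ) * Complex.I) • Ak k)) + |σ| := by
          rw [hsum]
  refine ⟨hmain, ?_, ?_⟩
  · -- eigenvalue argument bound
    intro μ hμ hμ0
    rw [spectrum.mem_iff] at hμ
    have hdet : (algebraMap ℂ (Matrix (Fin n) (Fin n) ℂ) μ - revProd Ak).det = 0 := by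
      by_contra hd
      exact hμ ((Matrix.isUnit_iff_isUnit_det _).mpr (isUnit_iff_ne_zero.mpr hd))
    obtain ⟨v, hv, hv0⟩ := Matrix.exists_mulVec_eq_zero_iff.mpr hdet
    have hMv : (revProd Ak).mulVec v = μ • v := by
      have h1 : (algebraMap ℂ (Matrix (Fin n) (Fin n) ℂ) μ - revProd Ak).mulVec v =
          μ • v - (revProd Ak).mulVec v := by
        rw [Matrix.sub_mulVec, Algebra.algebraMap_eq_smul_one, Matrix.smul_mulVec,
          Matrix.one_mulVec]
      rw [h1] at hv0
      linear_combination (norm := module) -hv0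
    have hMv0 : (revProd Ak).mulVec v ≠ 0 := by
      rw [hMv]; exact smul_ne_zero hμ0 hv
    have hang : ang v ((revProd Ak).mulVec v) = |μ.arg| := by
      rw [hMv]; exact ang_smul_self hμ0 hv
    have h1 : |μ.arg| ≤ singAngle (revProd Ak) := by
      rw [← hang]; exact ang_le_singAngle _ hv hMv0
    calc |μ.arg| ≤ singAngle (revProd Ak) := h1
      _ ≤ (∑ k, singAngle (Complex.exp (-(γ k : ℂ) * Complex.I) • Ak k)) + |σ| := hmain
      _ < Real.pi := h
  · -- invertibility of 1 + product
    by_contra hunit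
    have hdet : (1 + revProd Ak).det = 0 := by
      by_contra hd
      exact hunit ((Matrix.isUnit_iff_isUnit_det _).mpr (isUnit_iff_ne_zero.mpr hd))
    obtain ⟨v, hv, hv0⟩ := Matrix.exists_mulVec_eq_zero_iff.mpr hdet
    have hMv : (revProd Ak).mulVec v = (-1 : ℂ) • v := by
      rw [Matrix.add_mulVec, Matrix.one_mulVec] at hv0
      linear_combination (norm := module) hv0
    have hMv0 : (revProd Ak).mulVec v ≠ 0 := by
      rw [hMv]; exact smul_ne_zero (by norm_num) hv
    have hang : ang v ((revProd Ak).mulVec v) = |(-1 : ℂ).arg| := by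
      rw [hMv]; exact ang_smul_self (by norm_num) hv
    have h1 : Real.pi ≤ singAngle (revProd Ak) := by
      rw [Complex.arg_neg_one] at hang
      have := ang_le_singAngle (revProd Ak) hv hMv0
      rw [hang] at this
      rwa [abs_of_pos Real.pi_pos] at this
    have h2 : singAngle (revProd Ak) < Real.pi := lt_of_le_of_lt hmain h
    linarith
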